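/- Let p be prime, k ≥ 2, D and E finite sets, and α : D → E. Suppose V ≤ Z_p^N is a subspace, i = (1,...,1) ∈ V, and v : D → V satisfies: (s) Σ_{a∈D} v(a) = i; (o) w(v(a) ⊙ v(b) ⊙ u₁ ⊙ ⋯ ⊙ u_{k−2}) = 0 for all distinct a, b ∈ D and all u₁,...,u_{k−2} ∈ V; (p) w(v(a) ⊙ v(a) ⊙ u₁ ⊙ ⋯ ⊙ u_{k−2}) = w(v(a) ⊙ u₁ ⊙ ⋯ ⊙ u_{k−2}) for all a ∈ D and all u₁,...,u_{k−2} ∈ V. Then the pushforward v_α : E → V defined by v_α(b) = Σ_{a ∈ α⁻¹(b)} v(a) also satisfies conditions (s), (o), (p). -/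

import Mathlib

theorem stmt5 (p : ℕ) (hp : p.Prime) (k : ℕ) (hk : 2 ≤ k) (N : ℕ)
    (D E : Type) [Fintype D] [Fintype E] [DecidableEq E] (α : D → E)
    (V : Submodule (ZMod p) (Fin N → ZMod p))
    (hi : ((fun _ => 1) : Fin N → ZMod p) ∈ V)
    (v : D → Fin N → ZMod p) (hv : ∀ a, v a ∈ V)
    (hs : ∑ a, v a = fun _ => 1)
    (ho : ∀ a b : D, a ≠ b → ∀ u : Fin (k - 2) → Fin N → ZMod p, (∀ j, u j ∈ V) →
      ∑ n, v a n * v b n * ∏ j, u j n = 0)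
    (hpp : ∀ a : D, ∀ u : Fin (k - 2) → Fin N → ZMod p, (∀ j, u j ∈ V) →
      ∑ n, v a n * v a n * ∏ j, u j n = ∑ n, v a n * ∏ j, u j n) :
    ((∑ b, ∑ a ∈ Finset.univ.filter (fun a => α a = b), v a) = fun _ => 1) ∧
    (∀ b b' : E, b ≠ b' → ∀ u : Fin (k - 2) → Fin N → ZMod p, (∀ j, u j ∈ V) →
      ∑ n, (∑ a ∈ Finset.univ.filter (fun a => α a = b), v a) n *
           (∑ a ∈ Finset.univ.filter (fun a => α a = b'), v a) n * ∏ j, u j n = 0) ∧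
    (∀ b : E, ∀ u : Fin (k - 2) → Fin N → ZMod p, (∀ j, u j ∈ V) →
      ∑ n, (∑ a ∈ Finset.univ.filter (fun a => α a = b), v a) n *
           (∑ a ∈ Finset.univ.filter (fun a => α a = b), v a) n * ∏ j, u j n
        = ∑ n, (∑ a ∈ Finset.univ.filter (fun a => α a = b), v a) n * ∏ j, u j n) := by
  have key : ∀ (s t : Finset D) (u : Fin (k - 2) → Fin N → ZMod p),
      ∑ n, (∑ a ∈ s, v a) n * (∑ a ∈ t, v a) n * ∏ j, u j n
        = ∑ a ∈ s, ∑ a' ∈ t, ∑ n, v a n * v a' n * ∏ j, u j n := by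
    intro s t u
    have h : ∀ n, (∑ a ∈ s, v a n) * (∑ a' ∈ t, v a' n) * ∏ j, u j n
        = ∑ a ∈ s, ∑ a' ∈ t, v a n * v a' n * ∏ j, u j n := by
      intro n
      rw [Finset.sum_mul_sum, Finset.sum_mul]
      exact Finset.sum_congr rfl fun a _ => by rw [Finset.sum_mul]
    simp only [Finset.sum_apply, h]
    rw [Finset.sum_comm]
    exact Finset.sum_congr rfl fun a _ => Finset.sum_comm
  refine ⟨by rw [Finset.sum_fiberwise]; exact hs, ?_, ?_⟩
  · intro b b' hbb u hu
    rw [key]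
    refine Finset.sum_eq_zero fun a ha => Finset.sum_eq_zero fun a' ha' => ?_
    have hab : a ≠ a' := by
      rintro rfl
      simp only [Finset.mem_filter] at ha ha'
      exact hbb (ha.2 ▸ ha'.2 ▸ rfl)
    exact ho a a' hab u hu
  · intro b u hu
    rw [key]
    have hdiag : ∀ a ∈ Finset.univ.filter (fun a => α a = b),
        (∑ a' ∈ Finset.univ.filter (fun a => α a = b), ∑ n, v a n * v a' n * ∏ j, u j n)
          = ∑ n, v a n * ∏ j, u j n := by
      intro a ha
      rw [Finset.sum_eq_single_of_mem a ha (fun a' _ hne => ho a a' (Ne.symm hne) u hu)]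
      exact hpp a u hu
    rw [Finset.sum_congr rfl hdiag, Finset.sum_comm]
    exact Finset.sum_congr rfl fun n _ => by
      rw [Finset.sum_apply, Finset.sum_mul]
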